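/- Let C : {0,1}ⁿ → {0,1}^n̄ be an (ε, L)-list decodable code, and define Ext_C : {0,1}ⁿ × {0, …, n̄−1} → {0,1} by Ext_C(x, y) = C(x)_y (the y-th bit of the codeword of x). Then Ext_C is a (log₂ L + log₂(1/(2ε)), 2ε)-strong extractor: for every probability distribution P on {0,1}ⁿ with P(x) ≤ 2^(−(log₂ L + log₂(1/(2ε)))) for all x, and Y uniformly distributed on {0, …, n̄−1} independently of X ~ P, the statistical distance between the joint distribution of (Ext_C(X,Y), Y) and the joint distribution of (U, Y), where U is a uniform bit independent of Y, is at most 2ε. -/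

import Mathlib

/-- Lemma B.2 (De–Portmann–Vidick–Renner, Theorem C.3): if
C : {0,1}ⁿ → {0,1}^n̄ is an (ε, L)-list decodable code, then
Ext_C(x, y) = C(x)_y is a (log₂ L + log₂(1/(2ε)), 2ε)-strong extractor. -/
theorem stmt_8 (n nbar : ℕ) (hnbar : 1 ≤ nbar) (ε L : ℝ) (hε : 0 < ε) (hL : 0 < L)
    (C : (Fin n → Bool) → Fin nbar → Bool)
    (hC : ∀ w : Fin nbar → Bool,
      ((Finset.univ.filter
          (fun x : Fin n → Bool =>
            (hammingDist (C x) w : ℝ) ≤ (1 / 2 - ε) * nbar)).card : ℝ) ≤ L) :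
    ∀ P : (Fin n → Bool) → ℝ,
      (∀ x, 0 ≤ P x) → (∑ x, P x = 1) →
      (∀ x, P x ≤ (2 : ℝ) ^ (-(Real.logb 2 L + Real.logb 2 (1 / (2 * ε))))) →
      (1 / 2) * ∑ b : Bool, ∑ y : Fin nbar,
          |(1 / (nbar : ℝ)) * ∑ x ∈ Finset.univ.filter (fun x : Fin n → Bool => C x y = b), P x
            - (1 / (nbar : ℝ)) * (1 / 2)|
        ≤ 2 * ε := by
  classical
  intro P hP0 hPsum hPk
  have hnb : (0:ℝ) < nbar := by exact_mod_cast hnbar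
  -- the min-entropy bound in usable form
  have hPk' : ∀ x, P x ≤ 2*ε/L := by
    intro x
    have h2 : (2:ℝ) ^ (-(Real.logb 2 L + Real.logb 2 (1 / (2 * ε)))) = 2*ε/L := by
      rw [neg_add, Real.rpow_add (by norm_num), Real.rpow_neg (by norm_num),
          Real.rpow_neg (by norm_num), Real.rpow_logb (by norm_num) (by norm_num) hL,
          Real.rpow_logb (by norm_num) (by norm_num) (by positivity)]
      field_simp
    exact h2 ▸ hPk x
  -- the conditional probabilities
  set Q : Bool → Fin nbar → ℝ :=
    fun b y => ∑ x ∈ Finset.univ.filter (fun x : Fin n → Bool => C x y = b), P x with hQ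
  have hQsum : ∀ y, Q true y + Q false y = 1 := by
    intro y
    have h := Finset.sum_filter_add_sum_filter_not Finset.univ
      (fun x : Fin n → Bool => C x y = true) P
    simpa [hQ, hPsum, Bool.not_eq_true] using h
  -- the majority word
  set w : Fin nbar → Bool := fun y => if (1:ℝ)/2 ≤ Q true y then true else false with hw
  have habs : ∀ y, |Q true y - 1/2| = Q (w y) y - 1/2 := by
    intro y
    by_cases h : (1:ℝ)/2 ≤ Q true y
    · rw [hw]; simp only [if_pos h]
      exact abs_of_nonneg (by linarith)
    · have h1 : Q false y = 1 - Q true y := by linarith [hQsum y]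
      rw [hw]; simp only [if_neg h]
      rw [abs_of_neg (by linarith), h1]; ring
  have key : ∀ (b : Bool) (y : Fin nbar),
      |(1 / (nbar : ℝ)) * ∑ x ∈ Finset.univ.filter (fun x : Fin n → Bool => C x y = b), P x
        - (1 / (nbar : ℝ)) * (1 / 2)|
      = (1/(nbar:ℝ)) * (Q (w y) y - 1/2) := by
    intro b y
    show |(1 / (nbar : ℝ)) * Q b y - (1 / (nbar : ℝ)) * (1 / 2)| = _
    rw [← mul_sub, abs_mul, abs_of_nonneg (by positivity : (0:ℝ) ≤ 1/(nbar:ℝ))]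
    congr 1
    cases b
    · have h1 : Q false y - 1/2 = -(Q true y - 1/2) := by linarith [hQsum y]
      rw [h1, abs_neg, habs y]
    · exact habs y
  simp only [key, Fintype.sum_bool]
  have hhalf : (1:ℝ)/2 * ((∑ y, (1/(nbar:ℝ)) * (Q (w y) y - 1/2))
      + ∑ y, (1/(nbar:ℝ)) * (Q (w y) y - 1/2))
      = ∑ y, (1/(nbar:ℝ)) * (Q (w y) y - 1/2) := by ring
  rw [hhalf]
  -- agreement count
  set A : (Fin n → Bool) → ℕ :=
    fun x => (Finset.univ.filter (fun y : Fin nbar => C x y = w y)).card with hA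
  have hAd : ∀ x, (A x : ℝ) = (nbar : ℝ) - hammingDist (C x) w := by
    intro x
    have h : A x + hammingDist (C x) w = nbar := by
      have h0 := Finset.card_filter_add_card_filter_not
        (s := (Finset.univ : Finset (Fin nbar))) (p := fun y => C x y = w y)
      simpa [hA, hammingDist, Finset.card_univ] using h0
    have h' : ((A x : ℝ) + (hammingDist (C x) w : ℝ)) = (nbar : ℝ) := by exact_mod_cast h
    linarith
  have hAle : ∀ x, (A x : ℝ) ≤ nbar := by
    intro x
    have h : A x ≤ nbar := by
      rw [hA]
      simpa using (Finset.card_filter_le Finset.univ (fun y : Fin nbar => C x y = w y))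
    exact_mod_cast h
  -- swap sums
  have hswap : ∑ y, Q (w y) y = ∑ x, P x * (A x : ℝ) := by
    calc ∑ y, Q (w y) y
        = ∑ y : Fin nbar, ∑ x : Fin n → Bool, (if C x y = w y then P x else 0) :=
          Finset.sum_congr rfl fun y _ => Finset.sum_filter _ _
      _ = ∑ x : Fin n → Bool, ∑ y : Fin nbar, (if C x y = w y then P x else 0) :=
          Finset.sum_comm
      _ = ∑ x, P x * (A x : ℝ) := by
          refine Finset.sum_congr rfl fun x _ => ?_
          rw [← Finset.sum_filter, Finset.sum_const, hA, nsmul_eq_mul, mul_comm]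
  have hsplit : ∑ y, (1/(nbar:ℝ)) * (Q (w y) y - 1/2)
      = (1/(nbar:ℝ)) * (∑ x, P x * (A x:ℝ)) - 1/2 := by
    simp only [mul_sub]
    rw [Finset.sum_sub_distrib, ← Finset.mul_sum, hswap, Finset.sum_const,
      Finset.card_univ, Fintype.card_fin, nsmul_eq_mul]
    congr 1
    field_simp
  rw [hsplit]
  -- main estimate
  have hmain : ∑ x, P x * ((A x:ℝ) - nbar/2) ≤ 2*ε*nbar := by
    rw [← Finset.sum_filter_add_sum_filter_not Finset.univ
        (fun x : Fin n → Bool => (hammingDist (C x) w : ℝ) ≤ (1/2-ε)*nbar)]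
    have h1 : ∑ x ∈ Finset.univ.filter
        (fun x : Fin n → Bool => (hammingDist (C x) w : ℝ) ≤ (1/2-ε)*nbar),
        P x * ((A x:ℝ) - nbar/2) ≤ ε*nbar := by
      calc ∑ x ∈ Finset.univ.filter
            (fun x : Fin n → Bool => (hammingDist (C x) w : ℝ) ≤ (1/2-ε)*nbar),
            P x * ((A x:ℝ) - nbar/2)
          ≤ ∑ _x ∈ Finset.univ.filter
            (fun x : Fin n → Bool => (hammingDist (C x) w : ℝ) ≤ (1/2-ε)*nbar),
            (2*ε/L) * ((nbar:ℝ)/2) := by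
            refine Finset.sum_le_sum fun x _ => ?_
            have hb : (A x:ℝ) - nbar/2 ≤ (nbar:ℝ)/2 := by have := hAle x; linarith
            calc P x * ((A x:ℝ) - nbar/2) ≤ P x * ((nbar:ℝ)/2) :=
                  mul_le_mul_of_nonneg_left hb (hP0 x)
              _ ≤ (2*ε/L) * ((nbar:ℝ)/2) :=
                  mul_le_mul_of_nonneg_right (hPk' x) (by positivity)
        _ = ((Finset.univ.filter
            (fun x : Fin n → Bool => (hammingDist (C x) w : ℝ) ≤ (1/2-ε)*nbar)).card : ℝ)
            * ((2*ε/L) * ((nbar:ℝ)/2)) := by rw [Finset.sum_const, nsmul_eq_mul]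
        _ ≤ L * ((2*ε/L) * ((nbar:ℝ)/2)) :=
            mul_le_mul_of_nonneg_right (hC w) (by positivity)
        _ = ε*nbar := by field_simp
    have h2 : ∑ x ∈ Finset.univ.filter
        (fun x : Fin n → Bool => ¬ (hammingDist (C x) w : ℝ) ≤ (1/2-ε)*nbar),
        P x * ((A x:ℝ) - nbar/2) ≤ ε*nbar := by
      calc ∑ x ∈ Finset.univ.filter
            (fun x : Fin n → Bool => ¬ (hammingDist (C x) w : ℝ) ≤ (1/2-ε)*nbar),
            P x * ((A x:ℝ) - nbar/2)
          ≤ ∑ x ∈ Finset.univ.filter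
            (fun x : Fin n → Bool => ¬ (hammingDist (C x) w : ℝ) ≤ (1/2-ε)*nbar),
            P x * (ε*nbar) := by
            refine Finset.sum_le_sum fun x hx => ?_
            have hx' : ¬ (hammingDist (C x) w : ℝ) ≤ (1/2-ε)*nbar :=
              (Finset.mem_filter.mp hx).2
            push_neg at hx'
            have hb : (A x:ℝ) - nbar/2 ≤ ε*nbar := by
              have := hAd x; nlinarith
            exact mul_le_mul_of_nonneg_left hb (hP0 x)
        _ = (∑ x ∈ Finset.univ.filter
            (fun x : Fin n → Bool => ¬ (hammingDist (C x) w : ℝ) ≤ (1/2-ε)*nbar),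
            P x) * (ε*nbar) := by rw [Finset.sum_mul]
        _ ≤ 1 * (ε*nbar) := by
            refine mul_le_mul_of_nonneg_right ?_ (by positivity)
            rw [← hPsum]
            exact Finset.sum_le_sum_of_subset_of_nonneg (Finset.filter_subset _ _)
              (fun x _ _ => hP0 x)
        _ = ε*nbar := one_mul _
    linarith
  have hS : ∑ x, P x * ((A x:ℝ) - nbar/2) = (∑ x, P x * (A x:ℝ)) - nbar/2 := by
    simp only [mul_sub]
    rw [Finset.sum_sub_distrib, ← Finset.sum_mul, hPsum, one_mul]
  rw [hS] at hmain
  have hmono : (1/(nbar:ℝ)) * (∑ x, P x * (A x:ℝ))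
      ≤ (1/(nbar:ℝ)) * (2*ε*nbar + nbar/2) :=
    mul_le_mul_of_nonneg_left (by linarith) (by positivity)
  have heq : (1/(nbar:ℝ)) * (2*ε*nbar + nbar/2) = 2*ε + 1/2 := by
    field_simp
  linarith
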